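/- arXiv:1009.4830 — 2 statements merged into one kernel-verified Lean document; each statement's English description precedes it below -/
import Mathlib

section
/- Let V be a finite set and let S ⊆ {0,1}^V be nonempty. Then there exists a family of sets (D_α)_{α ∈ S} with D_α ⊆ V such that the subcubes B(D_α, α) := { β ∈ {0,1}^V : β(x) = α(x) for all x ∈ D_α } for α ∈ S are pairwise disjoint and their union is all of {0,1}^V. In particular α ∈ B(D_α, α) for every α ∈ S. -/
private lemma subcube_aux {V : Type*} [Fintype V] [DecidableEq V] :
    ∀ n (S : Finset (V → Bool)), S.card ≤ n → S.Nonempty →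
    ∃ D : (V → Bool) → Finset V,
      (∀ α ∈ S, ∀ α' ∈ S, α ≠ α' →
        ∀ β : V → Bool, ¬ ((∀ x ∈ D α, β x = α x) ∧ (∀ x ∈ D α', β x = α' x))) ∧
      (∀ β : V → Bool, ∃ α ∈ S, ∀ x ∈ D α, β x = α x) := by
  intro n
  induction n with
  | zero =>
    intro S hcard hne
    exact absurd (Finset.card_pos.mpr hne) (by omega)
  | succ n ih =>
    intro S hcard hne
    by_cases h1 : S.card ≤ 1
    · obtain ⟨α₀, hα₀⟩ := hne
      have hsing : ∀ α ∈ S, α = α₀ := by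
        intro α hα
        exact Finset.card_le_one.mp h1 α hα α₀ hα₀
      refine ⟨fun _ => ∅, ?_, ?_⟩
      · intro α hα α' hα' hne' β h
        exact hne' ((hsing α hα).trans (hsing α' hα').symm)
      · intro β
        exact ⟨α₀, hα₀, by simp⟩
    · push_neg at h1
      obtain ⟨α₁, hα₁, α₂, hα₂, hne12⟩ := Finset.one_lt_card.mp h1
      obtain ⟨x, hx⟩ := Function.ne_iff.mp hne12
      set S0 := S.filter (fun α => α x = false) with hS0
      set S1 := S.filter (fun α => α x = true) with hS1
      have hmem0 : ∀ α, α ∈ S0 ↔ α ∈ S ∧ α x = false := by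
        intro α; simp [hS0]
      have hmem1 : ∀ α, α ∈ S1 ↔ α ∈ S ∧ α x = true := by
        intro α; simp [hS1]
      have hne0 : S0.Nonempty := by
        cases h1 : α₁ x
        · exact ⟨α₁, (hmem0 α₁).mpr ⟨hα₁, h1⟩⟩
        · have h2 : α₂ x = false := by
            cases h2 : α₂ x
            · rfl
            · exact absurd (h1.trans h2.symm) hx
          exact ⟨α₂, (hmem0 α₂).mpr ⟨hα₂, h2⟩⟩
      have hne1 : S1.Nonempty := by
        cases h1 : α₁ x
        · have h2 : α₂ x = true := by
            cases h2 : α₂ x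
            · exact absurd (h1.trans h2.symm) hx
            · rfl
          exact ⟨α₂, (hmem1 α₂).mpr ⟨hα₂, h2⟩⟩
        · exact ⟨α₁, (hmem1 α₁).mpr ⟨hα₁, h1⟩⟩
      have hcard0 : S0.card ≤ n := by
        obtain ⟨γ, hγ⟩ := hne1
        have hγS := (hmem1 γ).mp hγ
        have hss : S0 ⊂ S := by
          refine ⟨Finset.filter_subset _ _, fun h => ?_⟩
          have := (hmem0 γ).mp (h hγS.1)
          rw [hγS.2] at this
          exact absurd this.2 (by simp)
        have := Finset.card_lt_card hss
        omega
      have hcard1 : S1.card ≤ n := by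
        obtain ⟨γ, hγ⟩ := hne0
        have hγS := (hmem0 γ).mp hγ
        have hss : S1 ⊂ S := by
          refine ⟨Finset.filter_subset _ _, fun h => ?_⟩
          have := (hmem1 γ).mp (h hγS.1)
          rw [hγS.2] at this
          exact absurd this.2 (by simp)
        have := Finset.card_lt_card hss
        omega
      obtain ⟨D0, hdisj0, hcov0⟩ := ih S0 hcard0 hne0
      obtain ⟨D1, hdisj1, hcov1⟩ := ih S1 hcard1 hne1
      refine ⟨fun α => if α x then insert x (D1 α) else insert x (D0 α), ?_, ?_⟩
      · intro α hα α' hα' hne' β ⟨h, h'⟩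
        cases hax : α x <;> cases hax' : α' x
        · simp only [hax, hax'] at h h'
          exact hdisj0 α ((hmem0 α).mpr ⟨hα, hax⟩) α' ((hmem0 α').mpr ⟨hα', hax'⟩) hne' β
            ⟨fun y hy => h y (Finset.mem_insert_of_mem hy),
             fun y hy => h' y (Finset.mem_insert_of_mem hy)⟩
        · simp only [hax, hax'] at h h'
          have e1 := h x (Finset.mem_insert_self _ _)
          have e2 := h' x (Finset.mem_insert_self _ _)
          rw [hax] at e1; rw [hax'] at e2
          exact absurd (e1.symm.trans e2) (by simp)
        · simp only [hax, hax'] at h h'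
          have e1 := h x (Finset.mem_insert_self _ _)
          have e2 := h' x (Finset.mem_insert_self _ _)
          rw [hax] at e1; rw [hax'] at e2
          exact absurd (e1.symm.trans e2) (by simp)
        · simp only [hax, hax'] at h h'
          exact hdisj1 α ((hmem1 α).mpr ⟨hα, hax⟩) α' ((hmem1 α').mpr ⟨hα', hax'⟩) hne' β
            ⟨fun y hy => h y (Finset.mem_insert_of_mem hy),
             fun y hy => h' y (Finset.mem_insert_of_mem hy)⟩
      · intro β
        cases hbx : β x
        · obtain ⟨α, hα, hagree⟩ := hcov0 β
          have hαS := (hmem0 α).mp hα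
          refine ⟨α, hαS.1, ?_⟩
          simp only [hαS.2, Bool.false_eq_true, if_false]
          intro y hy
          rcases Finset.mem_insert.mp hy with rfl | hy
          · rw [hbx, hαS.2]
          · exact hagree y hy
        · obtain ⟨α, hα, hagree⟩ := hcov1 β
          have hαS := (hmem1 α).mp hα
          refine ⟨α, hαS.1, ?_⟩
          simp only [hαS.2, if_true]
          intro y hy
          rcases Finset.mem_insert.mp hy with rfl | hy
          · rw [hbx, hαS.2]
          · exact hagree y hy

/-- For a nonempty set `S` of assignments over a finite variable set `V`, there is a
choice of defining variables `D α ⊆ V` for each `α ∈ S` such that the subcubes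
`B(D α, α) = {β : β agrees with α on D α}` are pairwise disjoint and cover all of
`{0,1}^V`; moreover `α ∈ B(D α, α)` automatically. -/
theorem subcube_partition_exists {V : Type*} [Fintype V] [DecidableEq V]
    (S : Finset (V → Bool)) (hS : S.Nonempty) :
    ∃ D : (V → Bool) → Finset V,
      (∀ α ∈ S, ∀ x ∈ D α, α x = α x) ∧
      (∀ α ∈ S, ∀ α' ∈ S, α ≠ α' →
        ∀ β : V → Bool, ¬ ((∀ x ∈ D α, β x = α x) ∧ (∀ x ∈ D α', β x = α' x))) ∧
      (∀ β : V → Bool, ∃ α ∈ S, ∀ x ∈ D α, β x = α x) := by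
  obtain ⟨D, hdisj, hcov⟩ := subcube_aux S.card S le_rfl hS
  exact ⟨D, fun α _ x _ => rfl, hdisj, hcov⟩
end

section
/- Let n ≥ 0, let r ∈ (0,1], and let (a_i)_{i=0}^n and (b_i)_{i=0}^n be sequences of nonnegative reals satisfying a_0 + b_0 = 1, a_{i+1} + b_{i+1} ≥ r · b_i for all 0 ≤ i < n, and b_n = 0. Then there exists j with 0 ≤ j ≤ n such that a_j ≥ r^j / (n+1). -/
/-- The arithmetic core of the guessing preprocessing: if `a 0 + b 0 = 1`, the
sequences are nonnegative, `a (i+1) + b (i+1) ≥ r · b i` for all `i < n`, and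
`b n = 0`, then some `j ≤ n` satisfies `a j ≥ r^j / (n+1)`. -/
theorem exists_good_guess_level (n : ℕ) (r : ℝ) (hr0 : 0 < r) (hr1 : r ≤ 1)
    (a b : ℕ → ℝ) (ha : ∀ i, 0 ≤ a i) (hb : ∀ i, 0 ≤ b i)
    (hinit : a 0 + b 0 = 1)
    (hstep : ∀ i < n, r * b i ≤ a (i + 1) + b (i + 1))
    (hend : b n = 0) :
    ∃ j ≤ n, r ^ j / (n + 1) ≤ a j := by
  by_contra hcon
  push_neg at hcon
  have hn1 : (0:ℝ) < (n:ℝ) + 1 := by positivity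
  have hcon' : ∀ j ≤ n, a j * ((n:ℝ) + 1) < r ^ j := by
    intro j hj
    have := hcon j hj
    rw [lt_div_iff₀ hn1] at this
    linarith
  have key : ∀ i ≤ n, r ^ i * ((n:ℝ) - i) < b i * ((n:ℝ) + 1) := by
    intro i
    induction i with
    | zero =>
      intro _
      have h0 := hcon' 0 (Nat.zero_le n)
      simp only [pow_zero, Nat.cast_zero, sub_zero, one_mul] at h0 ⊢
      nlinarith
    | succ i ih =>
      intro hi
      have hi' : i ≤ n := Nat.le_of_succ_le hi
      have hb' := ih hi'
      have hs := hstep i (Nat.lt_of_succ_le hi)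
      have ha' := hcon' (i+1) hi
      have hrp : 0 < r ^ i := pow_pos hr0 i
      have hmul : r ^ (i+1) * ((n:ℝ) - i) < r * b i * ((n:ℝ) + 1) := by
        have := mul_lt_mul_of_pos_left hb' hr0
        calc r ^ (i+1) * ((n:ℝ) - i) = r * (r ^ i * ((n:ℝ) - i)) := by ring
          _ < r * (b i * ((n:ℝ) + 1)) := this
          _ = r * b i * ((n:ℝ) + 1) := by ring
      push_cast
      push_cast at ha'
      nlinarith [hb (i+1), ha (i+1)]
  have hfin := key n le_rfl
  rw [hend] at hfin
  simp at hfin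
end
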